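/- The greedy 'prefer-largest' algorithm (start with 0^n, repeatedly append the lexicographically largest length-m word such that the new length-n suffix has not previously occurred as a factor at a modulo-m position, until stuck) terminates and produces an m-shift de Bruijn sequence of order n over Σ. -/

import Mathlib

/-- `w` is an `m`-shift de Bruijn sequence of order `n`: every word of length `n`
appears exactly once in `w` as a factor starting at a position `i*m` (0-indexed). -/
def IsMSdB {α : Type*} (m n : ℕ) (w : List α) : Prop :=
  ∀ u : List α, u.length = n → ∃! i : ℕ, i * m + n ≤ w.length ∧ (w.drop (i * m)).take n = u

/-- A block `b` of length `m` may be appended to the current word `w`: the length-`n`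
suffix of `w ++ b` does not occur in `w ++ b` as a factor at any earlier modulo-`m`
position. -/
def Allowed {α : Type*} (m n : ℕ) (w b : List α) : Prop :=
  ∀ j : ℕ, j * m + n ≤ w.length + m → j * m ≠ w.length + m - n →
    ((w ++ b).drop (j * m)).take n ≠ (w ++ b).drop (w.length + m - n)

/-- One step of the greedy "prefer-largest" algorithm: append the lexicographically
largest allowed block of length `m`. -/
def GreedyStep {α : Type*} [LinearOrder α] (m n : ℕ) (w w' : List α) : Prop :=
  ∃ b : List α, b.length = m ∧ Allowed m n w b ∧
    (∀ b' : List α, b'.length = m → Allowed m n w b' → b' ≤ b) ∧ w' = w ++ b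

/-- No block of length `m` can be appended any more. -/
def Stuck {α : Type*} (m n : ℕ) (w : List α) : Prop :=
  ¬ ∃ b : List α, b.length = m ∧ Allowed m n w b

open List

namespace SdB

variable {α : Type*}

def win (m n : ℕ) (w : List α) (i : ℕ) : List α := (w.drop (i * m)).take n

lemma win_length {m n : ℕ} {w : List α} {i : ℕ} (h : i * m + n ≤ w.length) :
    (win m n w i).length = n := by
  simp only [win, List.length_take, List.length_drop]
  omega

lemma win_append {m n : ℕ} {w b : List α} {i : ℕ} (h : i * m + n ≤ w.length) :
    win m n (w ++ b) i = win m n w i := by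
  unfold win
  rw [List.drop_append_of_le_length (by omega),
      List.take_append_of_le_length (by simp only [List.length_drop]; omega)]

lemma win_zero {m n : ℕ} {w : List α} : win m n w 0 = w.take n := by simp [win]

lemma win_overlap {m n : ℕ} {w : List α} (i : ℕ) :
    (win m n w i).drop m = (win m n w (i + 1)).take (n - m) := by
  unfold win
  have h1 : i * m + m = (i + 1) * m := by ring
  rw [List.drop_take, List.drop_drop, h1, List.take_take, min_eq_left (by omega)]

lemma win_new {m n : ℕ} {w b : List α} (hmn : m < n) (hb : b.length = m)
    {k : ℕ} (hk : w.length = n + k * m) :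
    win m n (w ++ b) (k + 1) = w.drop (w.length - (n - m)) ++ b := by
  unfold win
  have hkm : (k + 1) * m = k * m + m := by ring
  rw [List.drop_append_of_le_length (by omega)]
  have hlen2 : (w.drop ((k + 1) * m) ++ b).length = n := by
    simp only [List.length_append, List.length_drop, hb]; omega
  rw [List.take_of_length_le (le_of_eq hlen2)]
  congr 2
  omega

/-- The invariant maintained by the greedy algorithm. -/
structure Good [LinearOrder α] (m n : ℕ) (z : α) (w : List α) : Prop where
  hmod : ∃ k, w.length = n + k * m
  hpre : w.take n = List.replicate n z
  hinj : ∀ i j, i * m + n ≤ w.length → j * m + n ≤ w.length →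
      win m n w i = win m n w j → i = j
  hhist : ∀ i, 1 ≤ i → i * m + n ≤ w.length → ∀ b' : List α, b'.length = m →
      (win m n w i).drop (n - m) < b' →
      ∃ j, j < i ∧ j * m + n ≤ w.length ∧ win m n w j = (win m n w i).take (n - m) ++ b'

lemma Good.hlen [LinearOrder α] {m n : ℕ} {z : α} {w : List α} (hg : Good m n z w) :
    n ≤ w.length := by
  obtain ⟨k, hk⟩ := hg.hmod; omega

lemma allowed_iff {m n : ℕ} (hm : 1 ≤ m) (hmn : m < n) {w b : List α}
    {k : ℕ} (hk : w.length = n + k * m) :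
    Allowed m n w b ↔
      ∀ j, j * m + n ≤ w.length → win m n w j ≠ w.drop (w.length - (n - m)) ++ b := by
  have hkm : (k + 1) * m = k * m + m := by ring
  have hd : (w ++ b).drop (w.length + m - n) = w.drop (w.length - (n - m)) ++ b := by
    have he : w.length + m - n = w.length - (n - m) := by omega
    rw [he, List.drop_append_of_le_length (by omega)]
  constructor
  · intro hA j hj heq
    refine hA j (by omega) (by omega) ?_
    rw [hd]
    show win m n (w ++ b) j = _
    rw [win_append hj]
    exact heq
  · intro h j hj1 hj2 heq
    have hj3 : j * m ≤ (k + 1) * m := by omega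
    have hj4 : j ≤ k + 1 := Nat.le_of_mul_le_mul_right hj3 hm
    have hj5 : j ≤ k := by
      rcases Nat.lt_or_ge j (k + 1) with h' | h'
      · omega
      · exfalso; apply hj2; have : j = k + 1 := by omega
        subst this; omega
    have hj6 : j * m + n ≤ w.length := by
      have : j * m ≤ k * m := Nat.mul_le_mul_right m hj5
      omega
    apply h j hj6
    rw [← win_append (b := b) hj6, win, heq, hd]

end SdB

namespace SdB

lemma good_init [LinearOrder α] {m n : ℕ} (hm : 1 ≤ m) (z : α) :
    Good m n z (List.replicate n z) := by
  have hlen : (List.replicate n z).length = n := by simp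
  have hzero : ∀ i : ℕ, i * m + n ≤ n → i = 0 := by
    intro i hi
    have : i * m = 0 := by omega
    rcases Nat.mul_eq_zero.mp this with h | h
    · exact h
    · omega
  refine ⟨⟨0, by simp⟩, by simp, ?_, ?_⟩
  · intro i j hi hj _
    rw [hlen] at hi hj
    rw [hzero i hi, hzero j hj]
  · intro i hi1 hi2 b' hb' hlt
    rw [hlen] at hi2
    exact absurd (hzero i hi2) (by omega)

lemma good_step [LinearOrder α] {m n : ℕ} (hm : 1 ≤ m) (hmn : m < n) {z : α} {w w' : List α}
    (hg : Good m n z w) (hs : GreedyStep m n w w') : Good m n z w' := by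
  obtain ⟨b, hb, hAll, hmax, rfl⟩ := hs
  obtain ⟨k, hk⟩ := hg.hmod
  have hkm : (k + 1) * m = k * m + m := by ring
  have hlen' : (w ++ b).length = w.length + m := by simp [hb]
  have hnew := win_new (w := w) hmn hb hk
  have hidx : ∀ i : ℕ, i * m + n ≤ (w ++ b).length → i * m + n ≤ w.length ∨ i = k + 1 := by
    intro i hi
    rw [hlen'] at hi
    have h3 : i * m ≤ (k + 1) * m := by omega
    have h4 : i ≤ k + 1 := Nat.le_of_mul_le_mul_right h3 hm
    rcases Nat.lt_or_ge i (k + 1) with h' | h'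
    · left
      have h5 : i ≤ k := by omega
      have := Nat.mul_le_mul_right m h5
      omega
    · right; omega
  refine ⟨⟨k + 1, by omega⟩, ?_, ?_, ?_⟩
  · rw [List.take_append_of_le_length (by omega)]; exact hg.hpre
  · intro i j hi hj heq
    rcases hidx i hi with hi' | rfl
    · rcases hidx j hj with hj' | rfl
      · exact hg.hinj i j hi' hj' (by rw [win_append hi', win_append hj'] at heq; exact heq)
      · exfalso
        rw [win_append hi', hnew] at heq
        exact ((allowed_iff hm hmn hk).mp hAll) i hi' heq
    · rcases hidx j hj with hj' | rfl
      · exfalso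
        rw [win_append hj', hnew] at heq
        exact ((allowed_iff hm hmn hk).mp hAll) j hj' heq.symm
      · rfl
  · intro i hi1 hi2 b' hb' hlt
    rcases hidx i hi2 with hi' | rfl
    · obtain ⟨j, hj1, hj2, hj3⟩ := hg.hhist i hi1 hi' b' hb' (by rwa [win_append hi'] at hlt)
      exact ⟨j, hj1, by omega, by rw [win_append hj2, win_append hi']; exact hj3⟩
    · rw [hnew] at hlt ⊢
      set X := w.drop (w.length - (n - m)) with hX
      have htlen : X.length = n - m := by
        rw [hX]; simp only [List.length_drop]; omega
      have hdropb : (X ++ b).drop (n - m) = b := by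
        rw [← htlen]; exact List.drop_left
      have htakeb : (X ++ b).take (n - m) = X := by
        rw [← htlen]; exact List.take_left
      rw [hdropb] at hlt
      have hnA : ¬ Allowed m n w b' := fun hA => absurd (hmax b' hb' hA) (not_le.mpr hlt)
      rw [allowed_iff hm hmn hk] at hnA
      push_neg at hnA
      obtain ⟨j, hj1, hj2⟩ := hnA
      have hjk : j ≤ k := Nat.le_of_mul_le_mul_right (by omega : j * m ≤ k * m) hm
      refine ⟨j, by omega, by omega, ?_⟩
      rw [win_append hj1, hj2, htakeb]

end SdB

namespace SdB

lemma good_reachable [LinearOrder α] {m n : ℕ} (hm : 1 ≤ m) (hmn : m < n) {z : α} {w : List α}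
    (h : Relation.ReflTransGen (GreedyStep m n) (List.replicate n z) w) : Good m n z w := by
  induction h with
  | refl => exact good_init hm z
  | tail _ hstep ih => exact good_step hm hmn ih hstep

def blocksF (α : Type*) [Fintype α] [DecidableEq α] (k : ℕ) : Finset (List α) :=
  Finset.image (fun f : Fin k → α => List.ofFn f) Finset.univ

lemma mem_blocksF [Fintype α] [DecidableEq α] {k : ℕ} {l : List α} :
    l ∈ blocksF α k ↔ l.length = k := by
  constructor
  · intro h
    simp only [blocksF, Finset.mem_image, Finset.mem_univ, true_and] at h
    obtain ⟨f, rfl⟩ := h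
    simp
  · intro h
    simp only [blocksF, Finset.mem_image, Finset.mem_univ, true_and]
    refine ⟨fun i => l.get ⟨i, by omega⟩, ?_⟩
    apply List.ext_getElem (by simp [h])
    intro i h1 h2
    simp

lemma window_count [Fintype α] [DecidableEq α] [LinearOrder α] {m n : ℕ} {z : α} {w : List α}
    (hm : 1 ≤ m) (hg : Good m n z w) {k : ℕ} (hk : w.length = n + k * m) :
    k + 1 ≤ (blocksF α n).card := by
  have hb : ∀ i ∈ Finset.range (k + 1), win m n w i ∈ blocksF α n := by
    intro i hi
    rw [Finset.mem_range] at hi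
    have h1 : i * m ≤ k * m := Nat.mul_le_mul_right m (by omega)
    exact mem_blocksF.mpr (win_length (by omega))
  have := Finset.card_le_card_of_injOn (fun i => win m n w i) hb ?_
  · simpa using this
  · intro i hi j hj heq
    simp only [Finset.coe_range, Set.mem_Iio] at hi hj
    have h1 : i * m ≤ k * m := Nat.mul_le_mul_right m (by omega)
    have h2 : j * m ≤ k * m := Nat.mul_le_mul_right m (by omega)
    exact hg.hinj i j (by omega) (by omega) heq

lemma exists_stuck_aux [Fintype α] [LinearOrder α] {m n : ℕ} (hm : 1 ≤ m) (hmn : m < n)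
    (z : α) :
    ∀ N (w : List α), Good m n z w → n + (blocksF α n).card * m ≤ w.length + N →
      ∃ w', Relation.ReflTransGen (GreedyStep m n) w w' ∧ Stuck m n w' := by
  classical
  intro N
  induction N with
  | zero =>
    intro w hg hbound
    exfalso
    obtain ⟨k, hk⟩ := hg.hmod
    have h1 := window_count hm hg hk
    set C := (blocksF α n).card
    have h2 : k * m + m ≤ C * m := by
      have h3 : (k + 1) * m ≤ C * m := Nat.mul_le_mul_right m h1
      have h4 : (k + 1) * m = k * m + m := by ring
      omega
    omega
  | succ N ih =>
    intro w hg hbound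
    by_cases hstuck : Stuck m n w
    · exact ⟨w, Relation.ReflTransGen.refl, hstuck⟩
    · rw [Stuck, not_not] at hstuck
      obtain ⟨b₀, hb₀, hA₀⟩ := hstuck
      set A : Finset (List α) := (blocksF α m).filter (fun b => Allowed m n w b) with hA
      have hAne : A.Nonempty := ⟨b₀, by simp [hA, Finset.mem_filter, mem_blocksF, hb₀, hA₀]⟩
      set b := A.max' hAne with hbdef
      have hbA : b ∈ A := A.max'_mem hAne
      have hbl : b.length = m := mem_blocksF.mp (Finset.mem_filter.mp hbA).1
      have hbAll : Allowed m n w b := of_decide_eq_true (by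
        have := (Finset.mem_filter.mp hbA).2
        exact decide_eq_true this)
      have hstep : GreedyStep m n w (w ++ b) :=
        ⟨b, hbl, hbAll, fun b' h1 h2 =>
          Finset.le_max' A b' (Finset.mem_filter.mpr ⟨mem_blocksF.mpr h1, h2⟩), rfl⟩
      have hg' := good_step hm hmn hg hstep
      have hlen' : (w ++ b).length = w.length + m := by simp [hbl]
      obtain ⟨w', h1, h2⟩ := ih (w ++ b) hg' (by omega)
      exact ⟨w', Relation.ReflTransGen.head hstep h1, h2⟩

end SdB

namespace SdB

/-- all windows `y ++ b` occur. -/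
def Full (m n : ℕ) (w y : List α) : Prop :=
  ∀ b : List α, b.length = m → ∃ i, i * m + n ≤ w.length ∧ win m n w i = y ++ b

lemma replicate_min {z : α} [LinearOrder α] (hz : ∀ c : α, z ≤ c) (k : ℕ) (b : List α)
    (hb : b.length = k) : List.replicate k z ≤ b := by
  induction k generalizing b with
  | zero => simp [List.length_eq_zero_iff.mp hb]
  | succ k ih =>
    match b with
    | c :: b' =>
      simp only [List.replicate_succ]
      rcases lt_or_eq_of_le (hz c) with h | h
      · exact le_of_lt (List.Lex.rel h)
      · subst h
        rcases lt_or_eq_of_le (ih b' (by simpa using hb)) with h2 | h2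
        · exact le_of_lt (List.Lex.cons h2)
        · exact le_of_eq (by rw [h2])

lemma idx_iff {m n : ℕ} {w : List α} (hm : 1 ≤ m) {k : ℕ} (hk : w.length = n + k * m)
    {i : ℕ} : i ≤ k ↔ i * m + n ≤ w.length := by
  constructor
  · intro h
    have := Nat.mul_le_mul_right m h
    omega
  · intro h
    have h2 : i * m ≤ k * m := by omega
    exact Nat.le_of_mul_le_mul_right h2 hm

lemma stuck_full {m n : ℕ} {w : List α} (hm : 1 ≤ m) (hmn : m < n) {k : ℕ}
    (hk : w.length = n + k * m) (hstuck : Stuck m n w) :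
    Full m n w (w.drop (w.length - (n - m))) := by
  intro b hb
  have hnA : ¬ Allowed m n w b := fun hA => hstuck ⟨b, hb, hA⟩
  rw [allowed_iff hm hmn hk] at hnA
  push_neg at hnA
  obtain ⟨j, hj1, hj2⟩ := hnA
  exact ⟨j, hj1, hj2⟩

lemma win_k_drop {m n : ℕ} {w : List α} (hmn : m < n) {k : ℕ} (hk : w.length = n + k * m) :
    (win m n w k).drop m = w.drop (w.length - (n - m)) := by
  unfold win
  have h1 : (w.drop (k * m)).length = n := by simp; omega
  rw [List.take_of_length_le (le_of_eq h1), List.drop_drop]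
  congr 1
  omega

lemma win_decomp {m n : ℕ} {w : List α} {i q : ℕ} :
    (win m n w i).take q ++ (win m n w i).drop q = win m n w i :=
  List.take_append_drop q _

section Counting

variable [Fintype α] [DecidableEq α]

/-- indices whose window has prefix `y`. -/
def Spre (m n k : ℕ) (w : List α) (y : List α) : Finset ℕ :=
  (Finset.range (k + 1)).filter (fun i => (win m n w i).take (n - m) = y)

/-- indices whose window has suffix `y`. -/
def Sin (m n k : ℕ) (w : List α) (y : List α) : Finset ℕ :=
  (Finset.range (k + 1)).filter (fun i => (win m n w i).drop m = y)

variable [LinearOrder α]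

lemma card_Sin_le {m n : ℕ} {z : α} {w : List α} (hm : 1 ≤ m) (hmn : m < n)
    (hg : Good m n z w) {k : ℕ} (hk : w.length = n + k * m) (y : List α) :
    (Sin m n k w y).card ≤ (blocksF α m).card := by
  apply Finset.card_le_card_of_injOn (fun i => (win m n w i).take m)
  · intro i hi
    simp only [Sin, Finset.mem_filter, Finset.mem_range, Finset.mem_coe] at hi
    have h1 : i * m + n ≤ w.length := (idx_iff hm hk).mp (by omega)
    apply mem_blocksF.mpr
    rw [List.length_take, win_length h1]
    omega
  · intro i hi j hj heq
    simp only [Sin, Finset.coe_filter, Set.mem_setOf_eq, Finset.mem_range] at hi hj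
    have h1 : i * m + n ≤ w.length := (idx_iff hm hk).mp (by omega)
    have h2 : j * m + n ≤ w.length := (idx_iff hm hk).mp (by omega)
    apply hg.hinj i j h1 h2
    rw [← win_decomp (i := i) (q := m), ← win_decomp (i := j) (q := m), hi.2, hj.2]
    exact congrArg (· ++ y) heq

lemma card_Spre_le {m n : ℕ} {z : α} {w : List α} (hm : 1 ≤ m) (hmn : m < n)
    (hg : Good m n z w) {k : ℕ} (hk : w.length = n + k * m) (y : List α) :
    (Spre m n k w y).card ≤ (blocksF α m).card := by
  apply Finset.card_le_card_of_injOn (fun i => (win m n w i).drop (n - m))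
  · intro i hi
    simp only [Spre, Finset.mem_filter, Finset.mem_range, Finset.mem_coe] at hi
    have h1 : i * m + n ≤ w.length := (idx_iff hm hk).mp (by omega)
    apply mem_blocksF.mpr
    rw [List.length_drop, win_length h1]
    omega
  · intro i hi j hj heq
    simp only [Spre, Finset.coe_filter, Set.mem_setOf_eq, Finset.mem_range] at hi hj
    have h1 : i * m + n ≤ w.length := (idx_iff hm hk).mp (by omega)
    have h2 : j * m + n ≤ w.length := (idx_iff hm hk).mp (by omega)
    apply hg.hinj i j h1 h2
    rw [← win_decomp (i := i) (q := n - m), ← win_decomp (i := j) (q := n - m), hi.2, hj.2]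
    exact congrArg (y ++ ·) heq

omit [LinearOrder α] in
lemma blocks_le_card_Spre {m n : ℕ} {w : List α} (hm : 1 ≤ m)
    {k : ℕ} (hk : w.length = n + k * m) {y : List α} (hy : y.length = n - m)
    (hfull : Full m n w y) :
    (blocksF α m).card ≤ (Spre m n k w y).card := by
  classical
  have hch : ∀ b : List α, b.length = m → ∃ i, (i * m + n ≤ w.length ∧ win m n w i = y ++ b) :=
    fun b hb => hfull b hb
  choose f hf1 hf2 using hch
  apply Finset.card_le_card_of_injOn (fun b => if hb : b.length = m then f b hb else 0)
  · intro b hb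
    have hbm := mem_blocksF.mp hb
    simp only [hbm, dif_pos]
    simp only [Spre, Finset.mem_filter, Finset.mem_range, Finset.mem_coe]
    refine ⟨by have := (idx_iff hm hk).mpr (hf1 b hbm); omega, ?_⟩
    rw [hf2 b hbm, ← hy, List.take_left]
  · intro b hb b' hb' heq
    have hbm := mem_blocksF.mp hb
    have hbm' := mem_blocksF.mp hb'
    simp only [hbm, hbm', dif_pos] at heq
    have : y ++ b = y ++ b' := by rw [← hf2 b hbm, ← hf2 b' hbm', heq]
    exact List.append_cancel_left this

end Counting

end SdB

namespace SdB

section Counting2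

variable [Fintype α] [DecidableEq α] [LinearOrder α]

omit [Fintype α] [LinearOrder α] in
lemma card_shift (m n : ℕ) (k : ℕ) (w : List α) (y : List α) :
    ((Finset.range k).filter (fun i => (win m n w i).drop m = y)).card =
    ((Finset.range (k + 1)).filter (fun i => (win m n w i).take (n - m) = y ∧ i ≠ 0)).card := by
  apply Finset.card_nbij' (fun a => a + 1) (fun b => b - 1)
  · intro a ha
    simp only [Finset.mem_filter, Finset.mem_range, Finset.mem_coe] at ha ⊢
    exact ⟨by omega, by rw [← win_overlap]; exact ha.2, by omega⟩
  · intro b hb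
    simp only [Finset.mem_filter, Finset.mem_range, Finset.mem_coe] at hb ⊢
    obtain ⟨hb1, hb2, hb3⟩ := hb
    obtain ⟨c, rfl⟩ : ∃ c, b = c + 1 := ⟨b - 1, by omega⟩
    refine ⟨by omega, ?_⟩
    simpa [win_overlap] using hb2
  · intro a _; simp
  · intro b hb
    simp only [Finset.mem_filter, Finset.mem_range, Finset.mem_coe] at hb ⊢
    omega

omit [Fintype α] [LinearOrder α] in
lemma card_in_pre (m n : ℕ) (k : ℕ) (w : List α) (y : List α) :
    (Sin m n k w y).card + (if (win m n w 0).take (n - m) = y then 1 else 0) =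
    (Spre m n k w y).card + (if (win m n w k).drop m = y then 1 else 0) := by
  classical
  have h1 : (Sin m n k w y).card =
      ((Finset.range k).filter (fun i => (win m n w i).drop m = y)).card
      + (if (win m n w k).drop m = y then 1 else 0) := by
    unfold Sin
    rw [Finset.range_add_one, Finset.filter_insert]
    split_ifs with h
    · rw [Finset.card_insert_of_notMem (by simp)]
    · simp
  have h2 : (Spre m n k w y).card =
      ((Finset.range (k + 1)).filter (fun i => (win m n w i).take (n - m) = y ∧ i ≠ 0)).card
      + (if (win m n w 0).take (n - m) = y then 1 else 0) := by
    unfold Spre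
    split_ifs with h
    · have he : (Finset.range (k + 1)).filter (fun i => (win m n w i).take (n - m) = y ∧ i ≠ 0)
          = ((Finset.range (k + 1)).filter (fun i => (win m n w i).take (n - m) = y)).erase 0 := by
        rw [← Finset.filter_ne']
        rw [Finset.filter_filter]
      rw [he, Finset.card_erase_of_mem (by simp [Finset.mem_filter, h])]
      have hpos : 0 < ((Finset.range (k + 1)).filter
          (fun i => (win m n w i).take (n - m) = y)).card := by
        apply Finset.card_pos.mpr
        exact ⟨0, by simp [Finset.mem_filter, h]⟩
      omega
    · have he : (Finset.range (k + 1)).filter (fun i => (win m n w i).take (n - m) = y ∧ i ≠ 0)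
          = (Finset.range (k + 1)).filter (fun i => (win m n w i).take (n - m) = y) := by
        apply Finset.filter_congr
        intro x _
        constructor
        · intro hx; exact hx.1
        · intro hx
          refine ⟨hx, ?_⟩
          rintro rfl
          exact h hx
      rw [he]
      simp
  rw [h1, h2, card_shift m n]
  ring

end Counting2

end SdB

namespace SdB

section Final

variable [Fintype α] [DecidableEq α] [LinearOrder α]

lemma final_suffix {m n : ℕ} {z : α} {w : List α} (hm : 1 ≤ m) (hmn : m < n)
    (hg : Good m n z w) {k : ℕ} (hk : w.length = n + k * m) (hstuck : Stuck m n w) :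
    w.drop (w.length - (n - m)) = List.replicate (n - m) z := by
  set t := w.drop (w.length - (n - m)) with ht
  have htlen : t.length = n - m := by simp [ht]; omega
  have hfull : Full m n w t := stuck_full hm hmn hk hstuck
  by_contra hne
  have hpre0 : (win m n w 0).take (n - m) = List.replicate (n - m) z := by
    rw [win_zero, hg.hpre, List.take_replicate]
    congr 1
    omega
  have hsufk : (win m n w k).drop m = t := win_k_drop hmn hk
  have hci := card_in_pre (α := α) m n k w t
  rw [if_neg (by rw [hpre0]; exact fun hh => hne hh.symm), if_pos hsufk] at hci
  have hA := card_Sin_le hm hmn hg hk t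
  have hB := blocks_le_card_Spre hm hk htlen hfull
  omega

lemma in_full {m n : ℕ} {z : α} {w : List α} (hm : 1 ≤ m) (hmn : m < n)
    (hg : Good m n z w) {k : ℕ} (hk : w.length = n + k * m)
    (hT : w.drop (w.length - (n - m)) = List.replicate (n - m) z)
    {y : List α} (hy : y.length = n - m) (hfull : Full m n w y) :
    ∀ d : List α, d.length = m → ∃ i, i * m + n ≤ w.length ∧ win m n w i = d ++ y := by
  have hpre0 : (win m n w 0).take (n - m) = List.replicate (n - m) z := by
    rw [win_zero, hg.hpre, List.take_replicate]
    congr 1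
    omega
  have hsufk : (win m n w k).drop m = List.replicate (n - m) z := by
    rw [win_k_drop hmn hk, hT]
  have hci := card_in_pre (α := α) m n k w y
  have hcard : (Sin m n k w y).card = (Spre m n k w y).card := by
    by_cases hc : List.replicate (n - m) z = y
    · rw [if_pos (by rw [hpre0]; exact hc), if_pos (by rw [hsufk]; exact hc)] at hci
      omega
    · rw [if_neg (by rw [hpre0]; exact hc), if_neg (by rw [hsufk]; exact hc)] at hci
      omega
  have h2 := card_Spre_le hm hmn hg hk y
  have h3 := blocks_le_card_Spre hm hk hy hfull
  have hSin : (Sin m n k w y).card = (blocksF α m).card := by omega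
  intro d hd
  have hinjOn : Set.InjOn (fun i => (win m n w i).take m) (Sin m n k w y) := by
    intro i hi j hj heq
    simp only [Sin, Finset.coe_filter, Set.mem_setOf_eq, Finset.mem_range] at hi hj
    have h1 : i * m + n ≤ w.length := (idx_iff hm hk).mp (by omega)
    have h2' : j * m + n ≤ w.length := (idx_iff hm hk).mp (by omega)
    apply hg.hinj i j h1 h2'
    rw [← win_decomp (i := i) (q := m), ← win_decomp (i := j) (q := m), hi.2, hj.2]
    exact congrArg (· ++ y) heq
  have himg : (Sin m n k w y).image (fun i => (win m n w i).take m) = blocksF α m := by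
    apply Finset.eq_of_subset_of_card_le
    · intro x hx
      obtain ⟨i, hi, rfl⟩ := Finset.mem_image.mp hx
      simp only [Sin, Finset.mem_filter, Finset.mem_range] at hi
      have h1 : i * m + n ≤ w.length := (idx_iff hm hk).mp (by omega)
      apply mem_blocksF.mpr
      rw [List.length_take, win_length h1]
      omega
    · rw [Finset.card_image_of_injOn hinjOn, hSin]
  have hd' : d ∈ (Sin m n k w y).image (fun i => (win m n w i).take m) := by
    rw [himg]; exact mem_blocksF.mpr hd
  obtain ⟨i, hi, hwin⟩ := Finset.mem_image.mp hd'
  simp only [Sin, Finset.mem_filter, Finset.mem_range] at hi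
  refine ⟨i, (idx_iff hm hk).mp (by omega), ?_⟩
  rw [← win_decomp (i := i) (q := m), hwin, hi.2]

lemma full_step {m n : ℕ} {z : α} {w : List α} (hm : 1 ≤ m) (hmn : m < n)
    (hz : ∀ c : α, z ≤ c)
    (hg : Good m n z w) {k : ℕ} (hk : w.length = n + k * m) (hstuck : Stuck m n w)
    (hT : w.drop (w.length - (n - m)) = List.replicate (n - m) z)
    {p : List α} (hp : p.length = n - m)
    (hfs : Full m n w ((p ++ List.replicate m z).drop m)) : Full m n w p := by
  by_cases hpz : p = List.replicate (n - m) z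
  · rw [hpz, ← hT]; exact stuck_full hm hmn hk hstuck
  · set u := p ++ List.replicate m z with hu
    have hulen : u.length = n := by
      rw [hu, List.length_append, List.length_replicate, hp]; omega
    have hslen : (u.drop m).length = n - m := by rw [List.length_drop, hulen]
    have hdm : (u.take m).length = m := by rw [List.length_take, hulen]; omega
    obtain ⟨i, hi1, hi2⟩ := in_full hm hmn hg hk hT hslen hfs (u.take m) hdm
    rw [List.take_append_drop] at hi2
    have hi0 : i ≠ 0 := by
      rintro rfl
      rw [win_zero, hg.hpre] at hi2
      apply hpz
      calc p = u.take (n - m) := by rw [hu, ← hp]; rw [List.take_left]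
        _ = List.replicate (n - m) z := by
            rw [← hi2, List.take_replicate]
            congr 1
            omega
    intro b hb
    rcases eq_or_lt_of_le (replicate_min hz m b hb) with hbe | hbl
    · exact ⟨i, hi1, by rw [hi2, hu, ← hbe]⟩
    · have hdrop : (win m n w i).drop (n - m) = List.replicate m z := by
        rw [hi2, hu, ← hp, List.drop_left]
      obtain ⟨j, hj1, hj2, hj3⟩ := hg.hhist i (by omega) hi1 b hb (by rw [hdrop]; exact hbl)
      refine ⟨j, hj2, ?_⟩
      rw [hj3, hi2, hu, ← hp, List.take_left]

lemma full_all {m n : ℕ} {z : α} {w : List α} (hm : 1 ≤ m) (hmn : m < n)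
    (hz : ∀ c : α, z ≤ c)
    (hg : Good m n z w) {k : ℕ} (hk : w.length = n + k * m) (hstuck : Stuck m n w)
    (hT : w.drop (w.length - (n - m)) = List.replicate (n - m) z) :
    ∀ j (p : List α), p.length = n - m →
      (∀ idx, j ≤ idx → ∀ (h : idx < p.length), p[idx] = z) → Full m n w p := by
  intro j
  induction j using Nat.strong_induction_on with
  | _ j ih =>
    intro p hp hpz
    rcases Nat.eq_zero_or_pos j with rfl | hj
    · have hrep : p = List.replicate (n - m) z := by
        apply List.ext_getElem (by simp [hp])
        intro idx h1 h2
        rw [List.getElem_replicate]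
        exact hpz idx (Nat.zero_le _) h1
      rw [hrep, ← hT]
      exact stuck_full hm hmn hk hstuck
    · have hlen2 : (p ++ List.replicate m z).length = n := by
        rw [List.length_append, List.length_replicate, hp]; omega
      apply full_step hm hmn hz hg hk hstuck hT hp
      have hslen : ((p ++ List.replicate m z).drop m).length = n - m := by
        rw [List.length_drop, hlen2]
      apply ih (j - m) (by omega) _ hslen
      intro idx hidx h
      simp only [List.getElem_drop]
      by_cases hc : m + idx < p.length
      · rw [List.getElem_append_left hc]
        exact hpz (m + idx) (by omega) hc
      · rw [List.getElem_append_right (le_of_not_gt hc)]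
        exact List.getElem_replicate ..

lemma stuck_isMSdB {m n : ℕ} {z : α} {w : List α} (hm : 1 ≤ m) (hmn : m < n)
    (hz : ∀ c : α, z ≤ c) (hg : Good m n z w) (hstuck : Stuck m n w) : IsMSdB m n w := by
  obtain ⟨k, hk⟩ := hg.hmod
  have hT := final_suffix hm hmn hg hk hstuck
  intro u hu
  have hy : (u.take (n - m)).length = n - m := by rw [List.length_take, hu]; omega
  have hb : (u.drop (n - m)).length = m := by rw [List.length_drop, hu]; omega
  have hfull : Full m n w (u.take (n - m)) :=
    full_all hm hmn hz hg hk hstuck hT (n - m) (u.take (n - m)) hy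
      (fun idx hidx h => absurd h (by omega))
  obtain ⟨i, hi1, hi2⟩ := hfull (u.drop (n - m)) hb
  rw [List.take_append_drop] at hi2
  refine ⟨i, ⟨hi1, hi2⟩, ?_⟩
  rintro j ⟨hj1, hj2⟩
  exact hg.hinj j i hj1 hi1 (by rw [show win m n w j = u from hj2, hi2])

end Final

end SdB


/-- The greedy "prefer-largest" algorithm, started from `0^n`, terminates, and any
word it produces at termination is an `m`-shift de Bruijn sequence of order `n`. -/
theorem stmt19 {α : Type*} [Fintype α] [LinearOrder α] (m n : ℕ) (hm : 1 ≤ m) (hmn : m < n)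
    (z : α) (hz : ∀ c : α, z ≤ c) :
    (∃ w : List α,
        Relation.ReflTransGen (GreedyStep m n) (List.replicate n z) w ∧ Stuck m n w) ∧
    (∀ w : List α,
        Relation.ReflTransGen (GreedyStep m n) (List.replicate n z) w → Stuck m n w →
          IsMSdB m n w) := by
  classical
  constructor
  · obtain ⟨w, h1, h2⟩ := SdB.exists_stuck_aux hm hmn z ((SdB.blocksF α n).card * m)
      (List.replicate n z) (SdB.good_init hm z) (by simp)
    exact ⟨w, h1, h2⟩
  · intro w hreach hstuck
    exact SdB.stuck_isMSdB hm hmn hz (SdB.good_reachable hm hmn hreach) hstuck
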